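/- Under the group generated by the maps ρ(v₁,…,v₅) = (v₁ − s₂v₃ + (s₃ − s₁s₂)v₄ − ½s₂²v₅, v₂ + s₁v₃ + ½s₁²v₄ + (s₃+s₁s₂)v₅, v₃ + s₁v₄ + s₂v₅, v₄, v₅) for s₁,s₂,s₃ ∈ ℝ, together with the graded GL₂-action, every nonzero vector v ∈ ℝ⁵ with (v₄,v₅) ≠ (0,0) and 2v₁v₅ − 2v₂v₄ + v₃² > 0 can be mapped to e₅ + e₁ = (1,0,0,0,1). -/

import Mathlib

set_option maxHeartbeats 1000000


/-- The unipotent action of exp(𝔭₊) on 𝔪 ≅ ℝ⁵ (coordinates v₁,…,v₅ = indices 0,…,4). -/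
noncomputable def rhoAct (s1 s2 s3 : ℝ) (v : Fin 5 → ℝ) : Fin 5 → ℝ :=
  ![v 0 - s2 * v 2 + (s3 - s1 * s2) * v 3 - (1/2) * s2^2 * v 4,
    v 1 + s1 * v 2 + (1/2) * s1^2 * v 3 + (s3 + s1 * s2) * v 4,
    v 2 + s1 * v 3 + s2 * v 4,
    v 3,
    v 4]

/-- The graded GL₂-action on 𝔪 for A = [[a,b],[c,d]]. -/
noncomputable def glAct (a b c d : ℝ) (v : Fin 5 → ℝ) : Fin 5 → ℝ :=
  ![a * v 0 + b * v 1,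
    c * v 0 + d * v 1,
    (a * d - b * c) * v 2,
    (a * d - b * c) * (a * v 3 + b * v 4),
    (a * d - b * c) * (c * v 3 + d * v 4)]

noncomputable def rhoEquiv (s1 s2 s3 : ℝ) : (Fin 5 → ℝ) ≃ₗ[ℝ] (Fin 5 → ℝ) where
  toFun := rhoAct s1 s2 s3
  invFun u := ![u 0 + s2 * u 2 - s3 * u 3 - (1/2) * s2^2 * u 4,
    u 1 - s1 * u 2 + (1/2) * s1^2 * u 3 - s3 * u 4,
    u 2 - s1 * u 3 - s2 * u 4,
    u 3,
    u 4]
  map_add' x y := by funext i; fin_cases i <;> simp [rhoAct] <;> ring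
  map_smul' c x := by funext i; fin_cases i <;> simp [rhoAct] <;> ring
  left_inv x := by funext i; fin_cases i <;> simp [rhoAct] <;> ring
  right_inv x := by funext i; fin_cases i <;> simp [rhoAct] <;> ring

noncomputable def glEquiv (a b c d : ℝ) (h : a * d - b * c ≠ 0) :
    (Fin 5 → ℝ) ≃ₗ[ℝ] (Fin 5 → ℝ) where
  toFun := glAct a b c d
  invFun := glAct (d / (a*d - b*c)) (-b / (a*d - b*c)) (-c / (a*d - b*c)) (a / (a*d - b*c))
  map_add' x y := by funext i; fin_cases i <;> simp [glAct] <;> ring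
  map_smul' c x := by funext i; fin_cases i <;> simp [glAct] <;> ring
  left_inv x := by
    have h2 : d * a - b * c ≠ 0 := by rwa [mul_comm d a]
    have h3 : -(c * b) + a * d ≠ 0 := by intro h'; apply h; linarith
    have h4 : a * d - c * b ≠ 0 := by rwa [mul_comm c b]
    have h5 : -(c * b) + d * a ≠ 0 := by intro h'; apply h; linarith
    funext i; fin_cases i <;> (simp [glAct]; field_simp <;> ring)
  right_inv x := by
    have h2 : d * a - b * c ≠ 0 := by rwa [mul_comm d a]
    have h3 : -(c * b) + a * d ≠ 0 := by intro h'; apply h; linarith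
    have h4 : a * d - c * b ≠ 0 := by rwa [mul_comm c b]
    have h5 : -(c * b) + d * a ≠ 0 := by intro h'; apply h; linarith
    have h6 : d * a - c * b ≠ 0 := by intro h'; apply h; linarith
    funext i; fin_cases i <;> (simp [glAct]; field_simp <;> ring)


/-- The set of generators of the P₁-action: unipotent elements and GL₂ elements. -/
noncomputable def P1gens : Set ((Fin 5 → ℝ) ≃ₗ[ℝ] (Fin 5 → ℝ)) :=
  {f | (∃ s1 s2 s3 : ℝ, ∀ v, f v = rhoAct s1 s2 s3 v) ∨
       (∃ a b c d : ℝ, a * d - b * c ≠ 0 ∧ ∀ v, f v = glAct a b c d v)}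

lemma rhoEquiv_mem (s1 s2 s3 : ℝ) : rhoEquiv s1 s2 s3 ∈ Subgroup.closure P1gens :=
  Subgroup.subset_closure (Or.inl ⟨s1, s2, s3, fun _ => rfl⟩)

lemma glEquiv_mem (a b c d : ℝ) (h : a * d - b * c ≠ 0) :
    glEquiv a b c d h ∈ Subgroup.closure P1gens :=
  Subgroup.subset_closure (Or.inr ⟨a, b, c, d, h, fun _ => rfl⟩)

/-- Every nonzero v with (v₄,v₅) ≠ (0,0) and 2v₁v₅ − 2v₂v₄ + v₃² > 0 can be
mapped to e₅ + e₁ = (1,0,0,0,1) by the group generated by the unipotent and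
GL₂ actions. -/
theorem open_orbit_normal_form (v : Fin 5 → ℝ) (hv : v ≠ 0)
    (h45 : ¬ (v 3 = 0 ∧ v 4 = 0))
    (hQ : 2 * v 0 * v 4 - 2 * v 1 * v 3 + (v 2)^2 > 0) :
    ∃ f ∈ Subgroup.closure P1gens, f v = ![1, 0, 0, 0, 1] := by
  set p := v 3 with hp
  set q := v 4 with hq
  have hΔpos : 0 < q * q + p * p := by
    rcases not_and_or.mp h45 with h | h
    · nlinarith [mul_self_pos.mpr h, mul_self_nonneg q]
    · nlinarith [mul_self_pos.mpr h, mul_self_nonneg p]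
  have h1 : q * q - (-p) * p ≠ 0 := by nlinarith
  set Δ : ℝ := q * q + p * p with hΔ
  have hΔne : Δ ≠ 0 := ne_of_gt hΔpos
  set w0 : ℝ := q * v 0 + (-p) * v 1 with hw0
  set w1 : ℝ := p * v 0 + q * v 1 with hw1
  set g1 := glEquiv q (-p) p q h1 with hg1
  have hwv : g1 v = ![w0, w1, Δ * v 2, 0, Δ * Δ] := by
    funext i
    fin_cases i
    all_goals simp [hg1, glEquiv, glAct, hw0, hw1, hΔ, -mul_eq_zero]
    all_goals (try simp only [← hp, ← hq])
    all_goals (try (first | ring | tauto))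
    all_goals exact Or.inl trivial
  set s2 : ℝ := -(v 2) / Δ with hs2
  set s3 : ℝ := -w1 / (Δ * Δ) with hs3
  set g2 := rhoEquiv 0 s2 s3 with hg2
  set u0 : ℝ := w0 - s2 * (Δ * v 2) - (1/2) * s2^2 * (Δ * Δ) with hu0
  have huv : g2 (g1 v) = ![u0, 0, 0, 0, Δ * Δ] := by
    rw [hwv]
    funext i
    fin_cases i <;>
      simp [hg2, rhoEquiv, rhoAct, hu0, hs2, hs3] <;>
      field_simp [hs2, hs3] <;> ring
  have hu0Q : 2 * u0 * (Δ * Δ) = Δ^2 * (2 * v 0 * v 4 - 2 * v 1 * v 3 + (v 2)^2) := by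
    rw [hu0, hs2, hw0, ← hp, ← hq]
    field_simp
    ring
  have hu0pos : 0 < u0 := by nlinarith [mul_pos hΔpos hΔpos, sq_nonneg Δ]
  have hfrac : 0 < u0 / (Δ * Δ) := div_pos hu0pos (mul_pos hΔpos hΔpos)
  set r : ℝ := Real.sqrt (u0 / (Δ * Δ)) with hr
  have hrpos : 0 < r := Real.sqrt_pos.mpr hfrac
  have hrr : r * r = u0 / (Δ * Δ) := Real.mul_self_sqrt hfrac.le
  have hu0ne : u0 ≠ 0 := ne_of_gt hu0pos
  have hΔΔ : Δ * Δ ≠ 0 := mul_ne_zero hΔne hΔne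
  have h3 : (1 / u0) * r - 0 * 0 ≠ 0 := by
    have h4 : (0:ℝ) < (1 / u0) * r := by positivity
    simpa using h4.ne'
  set g3 := glEquiv (1/u0) 0 0 r h3 with hg3
  refine ⟨g3 * g2 * g1, mul_mem (mul_mem (glEquiv_mem _ _ _ _ _) (rhoEquiv_mem _ _ _))
    (glEquiv_mem _ _ _ _ _), ?_⟩
  have : (g3 * g2 * g1) v = g3 (g2 (g1 v)) := rfl
  rw [this, huv]
  have hrr2 : r * r * (Δ * Δ) = u0 := by rw [hrr]; field_simp
  funext i
  fin_cases i <;> simp [hg3, glEquiv, glAct] <;> field_simp <;>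
    nlinarith [hrr2, hrr, hu0pos, hrpos, mul_pos hΔpos hΔpos]
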